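/- In genus 1, the fourth powers of the three even theta nullwerte satisfy Jacobi's identity: theta[0;0](tau)^4 = theta[0;1](tau)^4 + theta[1;0](tau)^4 for all tau in the upper half plane. -/

import Mathlib

open scoped Real

/-- The theta nullwert with characteristic `(a;b)` in genus 1:
`θ[a;b](τ) = ∑_{p ∈ ℤ} exp(π i τ (p + a/2)² + π i (p + a/2) b)`. -/
noncomputable def thetaNull (a b : ℤ) (τ : UpperHalfPlane) : ℂ :=
  ∑' p : ℤ, Complex.exp (π * Complex.I * (τ : ℂ) * ((p : ℂ) + a / 2) ^ 2
    + π * Complex.I * ((p : ℂ) + a / 2) * b)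

open Complex

namespace JacobiAux

/-- General theta-type term: `exp(π i t (n + c)² + 2 π i n d)`. -/
noncomputable def f (t c d : ℂ) (n : ℤ) : ℂ :=
  Complex.exp (π * Complex.I * t * ((n : ℂ) + c) ^ 2 + 2 * π * Complex.I * (n : ℂ) * d)

lemma f_eq (t c d : ℂ) (n : ℤ) :
    f t c d n = Complex.exp (π * Complex.I * t * c ^ 2) * jacobiTheta₂_term n (t * c + d) t := by
  rw [f, jacobiTheta₂_term, ← Complex.exp_add]
  congr 1
  ring

lemma summable_norm_f {t : ℂ} (ht : 0 < t.im) (c d : ℂ) :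
    Summable fun n : ℤ => ‖f t c d n‖ := by
  simp only [f_eq, norm_mul]
  apply Summable.mul_left
  rw [summable_norm_iff]
  exact (summable_jacobiTheta₂_term_iff _ t).mpr ht

lemma exp_two_pi_int (r : ℤ) : Complex.exp ((r : ℂ) * (2 * π * Complex.I)) = 1 :=
  Complex.exp_int_mul_two_pi_mul_I r

lemma exp_add_int_two_pi (X : ℂ) (r : ℤ) :
    Complex.exp (X + (r : ℂ) * (2 * π * Complex.I)) = Complex.exp X := by
  rw [Complex.exp_add, exp_two_pi_int, mul_one]

lemma exp_add_int_two_pi_add_pi (X : ℂ) (r : ℤ) :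
    Complex.exp (X + ((r : ℂ) * (2 * π * Complex.I) + π * Complex.I)) =
      -Complex.exp X := by
  rw [← add_assoc, Complex.exp_add, exp_add_int_two_pi, Complex.exp_pi_mul_I, mul_neg_one]

/-- The parity-split equivalence `(Σ _ : Bool, ℤ × ℤ) ≃ ℤ × ℤ`. -/
def pe : (Σ _ : Bool, ℤ × ℤ) ≃ ℤ × ℤ where
  toFun x := (x.2.1 + x.2.2 + if x.1 then 1 else 0, x.2.1 - x.2.2)
  invFun p :=
    if (p.1 + p.2) % 2 = 0 then ⟨false, ((p.1 + p.2) / 2, (p.1 - p.2) / 2)⟩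
    else ⟨true, ((p.1 + p.2 - 1) / 2, (p.1 - p.2 - 1) / 2)⟩
  left_inv := by
    rintro ⟨b, r, s⟩
    cases b <;>
      simp only [Bool.false_eq_true, if_false, if_true] <;>
      split_ifs with h <;>
      first
      | (exfalso; omega)
      | (exact congrArg (Sigma.mk _) (Prod.ext (by omega) (by omega)))
  right_inv := by
    rintro ⟨m, n⟩
    by_cases h : (m + n) % 2 = 0 <;>
      simp only [h, if_true, if_false, reduceIte, Bool.false_eq_true] <;>
      exact Prod.ext (by omega) (by omega)

/-- Key rearrangement lemma: splitting a double theta-type sum by parity. -/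
lemma key {F G F₁ G₁ F₂ G₂ : ℤ → ℂ}
    (hF : Summable fun n => ‖F n‖) (hG : Summable fun n => ‖G n‖)
    (hF₁ : Summable fun n => ‖F₁ n‖) (hG₁ : Summable fun n => ‖G₁ n‖)
    (hF₂ : Summable fun n => ‖F₂ n‖) (hG₂ : Summable fun n => ‖G₂ n‖)
    (h1 : ∀ r s : ℤ, F (r + s) * G (r - s) = F₁ r * G₁ s)
    (h2 : ∀ r s : ℤ, F (r + s + 1) * G (r - s) = F₂ r * G₂ s) :
    (∑' n, F n) * (∑' n, G n) =
      (∑' n, F₁ n) * (∑' n, G₁ n) + (∑' n, F₂ n) * (∑' n, G₂ n) := by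
  rw [tsum_mul_tsum_of_summable_norm hF hG, tsum_mul_tsum_of_summable_norm hF₁ hG₁,
    tsum_mul_tsum_of_summable_norm hF₂ hG₂]
  have hs : Summable fun z : ℤ × ℤ => F z.1 * G z.2 := summable_mul_of_summable_norm hF hG
  rw [← pe.tsum_eq]
  have hs' : Summable fun x : Σ _ : Bool, ℤ × ℤ => F (pe x).1 * G (pe x).2 :=
    pe.summable_iff.mpr hs
  rw [hs'.tsum_sigma, tsum_bool]
  congr 1
  · refine tsum_congr fun p => ?_
    obtain ⟨r, s⟩ := p
    simpa [pe] using h1 r s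
  · refine tsum_congr fun p => ?_
    obtain ⟨r, s⟩ := p
    simpa [pe] using h2 r s

end JacobiAux

namespace JacobiAux

lemma theta00 (τ : UpperHalfPlane) : thetaNull 0 0 τ = ∑' n, f (τ : ℂ) 0 0 n := by
  refine tsum_congr fun p => ?_
  unfold f
  congr 1
  push_cast
  ring

lemma theta01 (τ : UpperHalfPlane) : thetaNull 0 1 τ = ∑' n, f (τ : ℂ) 0 (1 / 2) n := by
  refine tsum_congr fun p => ?_
  unfold f
  congr 1
  push_cast
  ring

lemma theta10 (τ : UpperHalfPlane) : thetaNull 1 0 τ = ∑' n, f (τ : ℂ) (1 / 2) 0 n := by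
  refine tsum_congr fun p => ?_
  unfold f
  congr 1
  push_cast
  ring

/-- Identity A: `θ₃(t)² = θ₃(2t)² + θ₂(2t)²`. -/
lemma idA {t : ℂ} (ht : 0 < t.im) (h2 : 0 < (2 * t).im) :
    (∑' n, f t 0 0 n) * (∑' n, f t 0 0 n) =
      (∑' n, f (2 * t) 0 0 n) * (∑' n, f (2 * t) 0 0 n) +
      (∑' n, f (2 * t) (1 / 2) 0 n) * (∑' n, f (2 * t) (1 / 2) 0 n) := by
  refine key (summable_norm_f ht 0 0) (summable_norm_f ht 0 0)
    (summable_norm_f h2 0 0) (summable_norm_f h2 0 0)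
    (summable_norm_f h2 (1 / 2) 0) (summable_norm_f h2 (1 / 2) 0) ?_ ?_ <;>
  · intro r s
    unfold f
    rw [← Complex.exp_add, ← Complex.exp_add]
    congr 1
    push_cast
    ring

/-- Identity B: `θ₄(t)² = θ₃(2t)² - θ₂(2t)²`. -/
lemma idB {t : ℂ} (ht : 0 < t.im) (h2 : 0 < (2 * t).im) :
    (∑' n, f t 0 (1 / 2) n) * (∑' n, f t 0 (1 / 2) n) =
      (∑' n, f (2 * t) 0 0 n) * (∑' n, f (2 * t) 0 0 n) +
      (∑' n, -f (2 * t) (1 / 2) 0 n) * (∑' n, f (2 * t) (1 / 2) 0 n) := by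
  refine key (summable_norm_f ht 0 (1 / 2)) (summable_norm_f ht 0 (1 / 2))
    (summable_norm_f h2 0 0) (summable_norm_f h2 0 0)
    (by simpa using (summable_norm_f h2 (1 / 2) 0)) (summable_norm_f h2 (1 / 2) 0) ?_ ?_
  · intro r s
    unfold f
    rw [← Complex.exp_add]
    calc Complex.exp (π * Complex.I * t * (((r + s : ℤ) : ℂ) + 0) ^ 2 +
          2 * π * Complex.I * ((r + s : ℤ) : ℂ) * (1 / 2) +
          (π * Complex.I * t * (((r - s : ℤ) : ℂ) + 0) ^ 2 +
          2 * π * Complex.I * ((r - s : ℤ) : ℂ) * (1 / 2)))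
        = Complex.exp ((π * Complex.I * (2 * t) * ((r : ℂ) + 0) ^ 2 +
            2 * π * Complex.I * (r : ℂ) * 0 +
            (π * Complex.I * (2 * t) * ((s : ℂ) + 0) ^ 2 +
            2 * π * Complex.I * (s : ℂ) * 0)) + (r : ℂ) * (2 * π * Complex.I)) := by
          congr 1; push_cast; ring
      _ = Complex.exp (π * Complex.I * (2 * t) * ((r : ℂ) + 0) ^ 2 +
            2 * π * Complex.I * (r : ℂ) * 0 +
            (π * Complex.I * (2 * t) * ((s : ℂ) + 0) ^ 2 +
            2 * π * Complex.I * (s : ℂ) * 0)) := exp_add_int_two_pi _ r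
      _ = _ := Complex.exp_add _ _
  · intro r s
    unfold f
    rw [← Complex.exp_add, neg_mul, ← Complex.exp_add]
    calc Complex.exp (π * Complex.I * t * (((r + s + 1 : ℤ) : ℂ) + 0) ^ 2 +
          2 * π * Complex.I * ((r + s + 1 : ℤ) : ℂ) * (1 / 2) +
          (π * Complex.I * t * (((r - s : ℤ) : ℂ) + 0) ^ 2 +
          2 * π * Complex.I * ((r - s : ℤ) : ℂ) * (1 / 2)))
        = Complex.exp ((π * Complex.I * (2 * t) * ((r : ℂ) + 1 / 2) ^ 2 +
            2 * π * Complex.I * (r : ℂ) * 0 +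
            (π * Complex.I * (2 * t) * ((s : ℂ) + 1 / 2) ^ 2 +
            2 * π * Complex.I * (s : ℂ) * 0)) + ((r : ℂ) * (2 * π * Complex.I) +
            π * Complex.I)) := by
          congr 1; push_cast; ring
      _ = -Complex.exp (π * Complex.I * (2 * t) * ((r : ℂ) + 1 / 2) ^ 2 +
            2 * π * Complex.I * (r : ℂ) * 0 +
            (π * Complex.I * (2 * t) * ((s : ℂ) + 1 / 2) ^ 2 +
            2 * π * Complex.I * (s : ℂ) * 0)) := exp_add_int_two_pi_add_pi _ r
      _ = _ := by rw [Complex.exp_add]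

/-- Identity C: `θ₂(t)² = 2 θ₂(2t) θ₃(2t)`. -/
lemma idC {t : ℂ} (ht : 0 < t.im) (h2 : 0 < (2 * t).im) :
    (∑' n, f t (1 / 2) 0 n) * (∑' n, f t (1 / 2) 0 n) =
      (∑' n, f (2 * t) (1 / 2) 0 n) * (∑' n, f (2 * t) 0 0 n) +
      (∑' n : ℤ, f (2 * t) 0 0 (n + 1)) * (∑' n, f (2 * t) (1 / 2) 0 n) := by
  have hs2 : Summable fun n : ℤ => ‖f (2 * t) 0 0 (n + 1)‖ :=
    (summable_norm_f h2 0 0).comp_injective (add_left_injective (1 : ℤ))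
  refine key (F₂ := fun n : ℤ => f (2 * t) 0 0 (n + 1))
    (summable_norm_f ht (1 / 2) 0) (summable_norm_f ht (1 / 2) 0)
    (summable_norm_f h2 (1 / 2) 0) (summable_norm_f h2 0 0)
    hs2 (summable_norm_f h2 (1 / 2) 0) ?_ ?_ <;>
  · intro r s
    unfold f
    rw [← Complex.exp_add, ← Complex.exp_add]
    congr 1
    push_cast
    ring

end JacobiAux

/-- Jacobi's identity
`θ[0;0]⁴ = θ[0;1]⁴ + θ[1;0]⁴` on the upper half plane. -/
theorem jacobi_identity (τ : UpperHalfPlane) :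
    thetaNull 0 0 τ ^ 4 = thetaNull 0 1 τ ^ 4 + thetaNull 1 0 τ ^ 4 := by
  open JacobiAux in
  have ht : 0 < (τ : ℂ).im := τ.2
  have h2 : 0 < (2 * (τ : ℂ)).im := by
    rw [Complex.mul_im]
    simpa using by positivity
  set t : ℂ := (τ : ℂ)
  set A : ℂ := ∑' n, f (2 * t) 0 0 n with hA
  set B : ℂ := ∑' n, f (2 * t) (1 / 2) 0 n with hB
  have hshift : (∑' n : ℤ, f (2 * t) 0 0 (n + 1)) = A := by
    rw [hA]
    exact ((Equiv.addRight (1 : ℤ)).tsum_eq (f (2 * t) 0 0))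
  have hnegB : (∑' n : ℤ, -f (2 * t) (1 / 2) 0 n) = -B := by
    rw [hB, tsum_neg]
  have e3 : thetaNull 0 0 τ ^ 2 = A * A + B * B := by
    rw [theta00, sq, idA ht h2]
  have e4 : thetaNull 0 1 τ ^ 2 = A * A + (-B) * B := by
    rw [theta01, sq, idB ht h2, hnegB]
  have e2 : thetaNull 1 0 τ ^ 2 = B * A + A * B := by
    rw [theta10, sq, idC ht h2, hshift]
  have h4 : ∀ z : ℂ, z ^ 4 = (z ^ 2) ^ 2 := fun z => by ring
  rw [h4, h4, h4, e3, e4, e2]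
  ring
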